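/- Let X ∈ ℝ^{d×n}, λ > 0, μ > 0, 0 < p, q < 2, and let Z_t, Z_{t+1} ∈ ℝ^{n×n} satisfy the IRLS update equation p·Z_{t+1}M_t + λq·Xᵀ(XZ_{t+1} − X)N_t = 0, where M_t = (Z_tᵀZ_t + μ²I)^{p/2−1} and N_t is the diagonal matrix with (N_t)_{ii} = (‖(XZ_t − X)_i‖_2² + μ²)^{q/2−1}. Then J(Z_{t+1}, μ) ≤ J(Z_t, μ); i.e., the objective is non-increasing along IRLS iterations. -/

import Mathlib

open Matrix

/-- Real power of a real symmetric matrix, defined through the spectral decomposition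
`A = U · diag(λ₁,…,λₙ) · Uᵀ` as `A^r = U · diag(λ₁^r,…,λₙ^r) · Uᵀ`
(junk value `0` if `A` is not symmetric). -/
noncomputable def mpow {n : ℕ} (A : Matrix (Fin n) (Fin n) ℝ) (r : ℝ) :
    Matrix (Fin n) (Fin n) ℝ :=
  if hA : A.IsHermitian then hA.cfc (fun x : ℝ => x ^ r) else 0

/-- The smoothed LRR objective
`J(Z, μ) = Tr((ZᵀZ + μ²I)^{p/2}) + λ·∑ᵢ (‖(XZ − X)ᵢ‖₂² + μ²)^{q/2}`,
where `(XZ − X)ᵢ` denotes the `i`-th column of `XZ − X`. -/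
noncomputable def smoothJ {d n : ℕ} (X : Matrix (Fin d) (Fin n) ℝ) (lam p q : ℝ)
    (Z : Matrix (Fin n) (Fin n) ℝ) (μ : ℝ) : ℝ :=
  (mpow (Zᵀ * Z + μ ^ 2 • (1 : Matrix (Fin n) (Fin n) ℝ)) (p / 2)).trace +
    lam * ∑ i, (∑ j, ((X * Z - X) j i) ^ 2 + μ ^ 2) ^ (q / 2)

section AuxLemmas

variable {n : ℕ} {A : Matrix (Fin n) (Fin n) ℝ}

lemma rpow_tangent {x s r : ℝ} (hx : 0 ≤ x) (hs : 0 < s) (hr0 : 0 < r) (hr1 : r < 1) :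
    x ^ r ≤ s ^ r + r * s ^ (r - 1) * (x - s) := by
  have h := Real.geom_mean_le_arith_mean2_weighted hr0.le (by linarith : (0:ℝ) ≤ 1 - r) hx hs.le
    (by ring)
  have h1 : s ^ (1 - r) * s ^ (r - 1) = 1 := by
    rw [← Real.rpow_add hs]; norm_num
  have h2 : s * s ^ (r - 1) = s ^ r := by
    nth_rewrite 1 [← Real.rpow_one s]
    rw [← Real.rpow_add hs]; ring_nf
  have h3 : 0 ≤ s ^ (r - 1) := Real.rpow_nonneg hs.le _
  have h4 : x ^ r * (s ^ (1 - r) * s ^ (r - 1)) ≤ (r * x + (1 - r) * s) * s ^ (r - 1) := by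
    rw [← mul_assoc]
    exact mul_le_mul_of_nonneg_right h h3
  rw [h1, mul_one] at h4
  nlinarith [h4, h2]

variable {n : ℕ} {A : Matrix (Fin n) (Fin n) ℝ}

lemma cfc_real (hA : A.IsHermitian) (f : ℝ → ℝ) :
    hA.cfc f = (hA.eigenvectorUnitary : Matrix (Fin n) (Fin n) ℝ) *
      diagonal (f ∘ hA.eigenvalues) * (hA.eigenvectorUnitary : Matrix (Fin n) (Fin n) ℝ)ᵀ := by
  rw [Matrix.IsHermitian.cfc, Unitary.conjStarAlgAut_apply, star_eq_conjTranspose, conjTranspose_eq_transpose_of_trivial]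
  congr 1

lemma trace_mul_cfc (hA : A.IsHermitian) (B : Matrix (Fin n) (Fin n) ℝ) (f : ℝ → ℝ) :
    (B * hA.cfc f).trace = ∑ i, f (hA.eigenvalues i) *
      (((hA.eigenvectorUnitary : Matrix (Fin n) (Fin n) ℝ)ᵀ * B *
        (hA.eigenvectorUnitary : Matrix (Fin n) (Fin n) ℝ)) i i) := by
  set V := (hA.eigenvectorUnitary : Matrix (Fin n) (Fin n) ℝ) with hV
  rw [cfc_real, ← mul_assoc, ← mul_assoc,
    trace_mul_cycle (B * V) (diagonal (f ∘ hA.eigenvalues)) Vᵀ, ← mul_assoc]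
  simp [Matrix.trace, Matrix.mul_diagonal, mul_comm, Matrix.diag]

lemma VtV (hA : A.IsHermitian) :
    (hA.eigenvectorUnitary : Matrix (Fin n) (Fin n) ℝ)ᵀ *
      (hA.eigenvectorUnitary : Matrix (Fin n) (Fin n) ℝ) = 1 := by
  rw [← conjTranspose_eq_transpose_of_trivial, ← star_eq_conjTranspose]
  exact Unitary.star_mul_self_of_mem (SetLike.coe_mem _)

lemma VVt (hA : A.IsHermitian) :
    (hA.eigenvectorUnitary : Matrix (Fin n) (Fin n) ℝ) *
      (hA.eigenvectorUnitary : Matrix (Fin n) (Fin n) ℝ)ᵀ = 1 := by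
  rw [← conjTranspose_eq_transpose_of_trivial, ← star_eq_conjTranspose]
  exact Unitary.coe_mul_star_self _

lemma diag_fact (hA : A.IsHermitian) :
    (hA.eigenvectorUnitary : Matrix (Fin n) (Fin n) ℝ)ᵀ * A *
      (hA.eigenvectorUnitary : Matrix (Fin n) (Fin n) ℝ) = diagonal hA.eigenvalues := by
  rw [← conjTranspose_eq_transpose_of_trivial, ← star_eq_conjTranspose,
    ← Unitary.conjStarAlgAut_star_apply (S := ℝ),
    Matrix.IsHermitian.conjStarAlgAut_star_eigenvectorUnitary]
  congr 1

lemma trace_cfc_real (hA : A.IsHermitian) (f : ℝ → ℝ) :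
    (hA.cfc f).trace = ∑ i, f (hA.eigenvalues i) := by
  have := trace_mul_cfc hA 1 f
  rw [one_mul] at this
  rw [this]
  refine Finset.sum_congr rfl fun i _ => ?_
  rw [mul_one, VtV hA, Matrix.one_apply_eq, mul_one]

lemma trace_self_mul_cfc (hA : A.IsHermitian) (f : ℝ → ℝ) :
    (A * hA.cfc f).trace = ∑ i, f (hA.eigenvalues i) * hA.eigenvalues i := by
  rw [trace_mul_cfc hA A f, ]
  refine Finset.sum_congr rfl fun i _ => ?_
  rw [diag_fact hA, Matrix.diagonal_apply_eq]

lemma quad_entry {d : ℕ} (P : Matrix (Fin d) (Fin n) ℝ) (V : Matrix (Fin n) (Fin n) ℝ) (i : Fin n) :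
    (Vᵀ * (Pᵀ * P) * V) i i = ∑ k, ((P * V) k i) ^ 2 := by
  have h : Vᵀ * (Pᵀ * P) * V = (P * V)ᵀ * (P * V) := by
    rw [transpose_mul]; simp only [Matrix.mul_assoc]
  rw [h]
  simp [Matrix.mul_apply, sq, mul_comm]

lemma quad_entry_shift {d : ℕ} (P : Matrix (Fin d) (Fin n) ℝ) (V : Matrix (Fin n) (Fin n) ℝ)
    (hV : Vᵀ * V = 1) (c : ℝ) (i : Fin n) :
    (Vᵀ * (Pᵀ * P + c • (1 : Matrix (Fin n) (Fin n) ℝ)) * V) i i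
      = ∑ k, ((P * V) k i) ^ 2 + c := by
  have h : Vᵀ * (c • (1 : Matrix (Fin n) (Fin n) ℝ)) * V = c • (1 : Matrix (Fin n) (Fin n) ℝ) := by
    rw [Matrix.mul_smul, mul_one, Matrix.smul_mul, hV]
  rw [mul_add, add_mul, h]
  simp [quad_entry, Matrix.add_apply]

lemma conj_diag_entry (D : Fin n → ℝ) (W : Matrix (Fin n) (Fin n) ℝ) (i : Fin n) :
    (Wᵀ * (diagonal D * W)) i i = ∑ j, (W j i) ^ 2 * D j := by
  simp only [Matrix.mul_apply, Matrix.transpose_apply, Matrix.diagonal_apply, ite_mul, zero_mul,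
    Finset.sum_ite_eq, Finset.mem_univ, if_true]
  refine Finset.sum_congr rfl fun j _ => by ring

lemma col_sq_sum {W : Matrix (Fin n) (Fin n) ℝ} (h : Wᵀ * W = 1) (i : Fin n) :
    ∑ j, (W j i) ^ 2 = 1 := by
  have := congrFun (congrFun h i) i
  simp only [Matrix.mul_apply, Matrix.transpose_apply, Matrix.one_apply_eq] at this
  rw [← this]
  exact Finset.sum_congr rfl fun j _ => (sq (W j i)).symm ▸ rfl

lemma row_sq_sum {W : Matrix (Fin n) (Fin n) ℝ} (h : W * Wᵀ = 1) (j : Fin n) :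
    ∑ i, (W j i) ^ 2 = 1 := by
  have := congrFun (congrFun h j) j
  simp only [Matrix.mul_apply, Matrix.transpose_apply, Matrix.one_apply_eq] at this
  rw [← this]
  exact Finset.sum_congr rfl fun i _ => (sq (W j i)).symm ▸ rfl

lemma spectral_real (hA : A.IsHermitian) :
    A = (hA.eigenvectorUnitary : Matrix (Fin n) (Fin n) ℝ) * diagonal hA.eigenvalues *
      (hA.eigenvectorUnitary : Matrix (Fin n) (Fin n) ℝ)ᵀ := by
  have h := diag_fact hA
  calc A = ((hA.eigenvectorUnitary : Matrix (Fin n) (Fin n) ℝ) *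
        (hA.eigenvectorUnitary : Matrix (Fin n) (Fin n) ℝ)ᵀ) * A *
        ((hA.eigenvectorUnitary : Matrix (Fin n) (Fin n) ℝ) *
        (hA.eigenvectorUnitary : Matrix (Fin n) (Fin n) ℝ)ᵀ) := by rw [VVt hA, one_mul, mul_one]
    _ = _ := by rw [← h]; simp only [Matrix.mul_assoc]

lemma cfc_isHermitian (hA : A.IsHermitian) (f : ℝ → ℝ) : (hA.cfc f).IsHermitian := by
  rw [Matrix.IsHermitian, cfc_real, conjTranspose_eq_transpose_of_trivial]
  rw [transpose_mul, transpose_mul, transpose_transpose, diagonal_transpose, Matrix.mul_assoc]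

lemma mpow_eq (hA : A.IsHermitian) (r : ℝ) : mpow A r = hA.cfc (fun x : ℝ => x ^ r) := dif_pos hA

lemma mpow_isHermitian (hA : A.IsHermitian) (r : ℝ) : (mpow A r).IsHermitian := by
  rw [mpow_eq hA]; exact cfc_isHermitian hA _

lemma herm_shift (Z : Matrix (Fin n) (Fin n) ℝ) (c : ℝ) :
    (Zᵀ * Z + c • (1 : Matrix (Fin n) (Fin n) ℝ)).IsHermitian := by
  rw [Matrix.IsHermitian, conjTranspose_eq_transpose_of_trivial, transpose_add, transpose_mul,
    transpose_transpose, transpose_smul, transpose_one]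

lemma klein_spec (Z₀ Z₁ : Matrix (Fin n) (Fin n) ℝ) {c r : ℝ} (hc : 0 < c)
    (hr0 : 0 < r) (hr1 : r < 1) :
    (mpow (Z₁ᵀ * Z₁ + c • (1 : Matrix (Fin n) (Fin n) ℝ)) r).trace ≤
      (mpow (Z₀ᵀ * Z₀ + c • (1 : Matrix (Fin n) (Fin n) ℝ)) r).trace +
        r * (((Z₁ᵀ * Z₁ + c • (1 : Matrix (Fin n) (Fin n) ℝ)) -
              (Z₀ᵀ * Z₀ + c • (1 : Matrix (Fin n) (Fin n) ℝ))) *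
            mpow (Z₀ᵀ * Z₀ + c • (1 : Matrix (Fin n) (Fin n) ℝ)) (r - 1)).trace := by
  set A := Z₀ᵀ * Z₀ + c • (1 : Matrix (Fin n) (Fin n) ℝ) with hAdef
  set B := Z₁ᵀ * Z₁ + c • (1 : Matrix (Fin n) (Fin n) ℝ) with hBdef
  have hA : A.IsHermitian := herm_shift Z₀ c
  have hB : B.IsHermitian := herm_shift Z₁ c
  set V := (hA.eigenvectorUnitary : Matrix (Fin n) (Fin n) ℝ) with hVdef
  set VB := (hB.eigenvectorUnitary : Matrix (Fin n) (Fin n) ℝ) with hVBdef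
  set s := hA.eigenvalues with hsdef
  set t := hB.eigenvalues with htdef
  set W := VBᵀ * V with hWdef
  set g : Fin n → ℝ := fun i => (Vᵀ * B * V) i i with hgdef
  -- eigenvalue positivity
  have hsc : ∀ i, c ≤ s i := by
    intro i
    have h1 : (Vᵀ * A * V) i i = ∑ k, ((Z₀ * V) k i) ^ 2 + c := quad_entry_shift Z₀ V (VtV hA) c i
    have h2 : (Vᵀ * A * V) i i = s i := by rw [diag_fact hA, Matrix.diagonal_apply_eq]
    have h3 : (0:ℝ) ≤ ∑ k, ((Z₀ * V) k i) ^ 2 := Finset.sum_nonneg fun k _ => sq_nonneg _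
    rw [h1] at h2; linarith
  have htc : ∀ j, c ≤ t j := by
    intro j
    have h1 : (VBᵀ * B * VB) j j = ∑ k, ((Z₁ * VB) k j) ^ 2 + c :=
      quad_entry_shift Z₁ VB (VtV hB) c j
    have h2 : (VBᵀ * B * VB) j j = t j := by rw [diag_fact hB, Matrix.diagonal_apply_eq]
    have h3 : (0:ℝ) ≤ ∑ k, ((Z₁ * VB) k j) ^ 2 := Finset.sum_nonneg fun k _ => sq_nonneg _
    rw [h1] at h2; linarith
  have hgc : ∀ i, c ≤ g i := by
    intro i
    have h1 : (Vᵀ * B * V) i i = ∑ k, ((Z₁ * V) k i) ^ 2 + c := quad_entry_shift Z₁ V (VtV hA) c i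
    have h3 : (0:ℝ) ≤ ∑ k, ((Z₁ * V) k i) ^ 2 := Finset.sum_nonneg fun k _ => sq_nonneg _
    simp only [hgdef, h1]; linarith
  -- unitarity of W
  have hWt : Wᵀ = Vᵀ * VB := by rw [hWdef, transpose_mul, transpose_transpose]
  have hWtW : Wᵀ * W = 1 := by
    rw [hWt, hWdef, show Vᵀ * VB * (VBᵀ * V) = Vᵀ * (VB * VBᵀ) * V by
      simp only [Matrix.mul_assoc], VVt hB, mul_one, VtV hA]
  have hWWt : W * Wᵀ = 1 := by
    rw [hWt, hWdef, show VBᵀ * V * (Vᵀ * VB) = VBᵀ * (V * Vᵀ) * VB by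
      simp only [Matrix.mul_assoc], VVt hA, mul_one, VtV hB]
  -- mixing identity
  have hmix : ∀ i, g i = ∑ j, (W j i) ^ 2 * t j := by
    intro i
    have hBe : Vᵀ * B * V = Wᵀ * (diagonal t * W) := by
      nth_rewrite 1 [spectral_real hB]
      rw [hWt, hWdef]
      simp only [Matrix.mul_assoc]
      rfl
    simp only [hgdef, hBe, conj_diag_entry]
  -- trace computations
  have ht1 : (mpow B r).trace = ∑ j, t j ^ r := by rw [mpow_eq hB, trace_cfc_real hB]
  have ht2 : (mpow A r).trace = ∑ i, s i ^ r := by rw [mpow_eq hA, trace_cfc_real hA]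
  have ht3 : (B * mpow A (r - 1)).trace = ∑ i, s i ^ (r - 1) * g i := by
    rw [mpow_eq hA, trace_mul_cfc hA B]
  have ht4 : (A * mpow A (r - 1)).trace = ∑ i, s i ^ (r - 1) * s i := by
    rw [mpow_eq hA, trace_self_mul_cfc hA]
  have htsub : ((B - A) * mpow A (r - 1)).trace
      = (∑ i, s i ^ (r - 1) * g i) - ∑ i, s i ^ (r - 1) * s i := by
    rw [Matrix.sub_mul, trace_sub, ht3, ht4]
  -- the chain
  have hchain : (∑ j, t j ^ r) ≤ ∑ i, (s i ^ r + r * s i ^ (r - 1) * (g i - s i)) := by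
    have step1 : (∑ j, t j ^ r) = ∑ i, ∑ j, (W j i) ^ 2 * t j ^ r := by
      rw [Finset.sum_comm]
      refine Finset.sum_congr rfl fun j _ => ?_
      rw [← Finset.sum_mul, row_sq_sum hWWt, one_mul]
    rw [step1]
    refine Finset.sum_le_sum fun i _ => ?_
    have jensen : ∑ j, (W j i) ^ 2 * t j ^ r ≤ (∑ j, (W j i) ^ 2 * t j) ^ r := by
      have h := (Real.concaveOn_rpow hr0.le hr1.le).le_map_sum
        (t := Finset.univ) (w := fun j => (W j i) ^ 2) (p := t)
        (fun j _ => sq_nonneg _) (col_sq_sum hWtW i)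
        (fun j _ => Set.mem_Ici.mpr (le_trans hc.le (htc j)))
      simpa [smul_eq_mul] using h
    have hgi : g i = ∑ j, (W j i) ^ 2 * t j := hmix i
    have tangent : (g i) ^ r ≤ s i ^ r + r * s i ^ (r - 1) * (g i - s i) :=
      rpow_tangent (le_trans hc.le (hgc i)) (lt_of_lt_of_le hc (hsc i)) hr0 hr1
    calc ∑ j, (W j i) ^ 2 * t j ^ r ≤ (∑ j, (W j i) ^ 2 * t j) ^ r := jensen
      _ = (g i) ^ r := by rw [← hgi]
      _ ≤ _ := tangent
  -- assemble
  have hsum : ∑ i, (s i ^ r + r * s i ^ (r - 1) * (g i - s i))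
      = (∑ i, s i ^ r) + r * ((∑ i, s i ^ (r - 1) * g i) - ∑ i, s i ^ (r - 1) * s i) := by
    rw [Finset.sum_add_distrib]
    congr 1
    rw [mul_sub, Finset.mul_sum, Finset.mul_sum, ← Finset.sum_sub_distrib]
    exact Finset.sum_congr rfl fun i _ => by ring
  rw [ht1, ht2, htsub]
  rw [hsum] at hchain
  exact hchain

lemma trace_weight {d : ℕ} (P Q : Matrix (Fin d) (Fin n) ℝ) (ν : Fin n → ℝ) :
    (Pᵀ * (Q * diagonal ν)).trace = ∑ i, ν i * ∑ j, P j i * Q j i := by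
  simp only [Matrix.trace, Matrix.diag, Matrix.mul_apply, Matrix.diagonal_apply,
    Matrix.transpose_apply, mul_ite, mul_zero, Finset.sum_ite_eq', Finset.mem_univ, if_true]
  refine Finset.sum_congr rfl fun i _ => ?_
  rw [Finset.mul_sum]
  refine Finset.sum_congr rfl fun j _ => by ring

lemma trace_swap (Xm Y M : Matrix (Fin n) (Fin n) ℝ) (hM : Mᵀ = M) :
    (Xmᵀ * (Y * M)).trace = (Yᵀ * (Xm * M)).trace := by
  have h : (Xmᵀ * (Y * M))ᵀ = M * (Yᵀ * Xm) := by
    rw [transpose_mul, transpose_mul, transpose_transpose, hM, Matrix.mul_assoc]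
  rw [← Matrix.trace_transpose (Xmᵀ * (Y * M)), h, Matrix.trace_mul_comm]
  simp only [Matrix.mul_assoc]

lemma expand_quad (Z₀ Z₁ M : Matrix (Fin n) (Fin n) ℝ) (hM : Mᵀ = M) :
    ((Z₁ᵀ * Z₁ - Z₀ᵀ * Z₀) * M).trace =
      -2 * ((Z₀ - Z₁)ᵀ * (Z₁ * M)).trace - ((Z₀ - Z₁)ᵀ * ((Z₀ - Z₁) * M)).trace := by
  have key : (Z₁ᵀ * Z₁ - Z₀ᵀ * Z₀) * M =
      -((Z₀ - Z₁)ᵀ * (Z₁ * M) + Z₁ᵀ * ((Z₀ - Z₁) * M) + (Z₀ - Z₁)ᵀ * ((Z₀ - Z₁) * M)) := by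
    simp only [transpose_sub]
    noncomm_ring
  rw [key, trace_neg, trace_add, trace_add, trace_swap Z₁ (Z₀ - Z₁) M hM]
  ring

lemma eig_shift_ge (Z : Matrix (Fin n) (Fin n) ℝ) (c : ℝ)
    (hA : (Zᵀ * Z + c • (1 : Matrix (Fin n) (Fin n) ℝ)).IsHermitian) (i : Fin n) :
    c ≤ hA.eigenvalues i := by
  set V := (hA.eigenvectorUnitary : Matrix (Fin n) (Fin n) ℝ)
  have h1 : (Vᵀ * (Zᵀ * Z + c • (1 : Matrix (Fin n) (Fin n) ℝ)) * V) i i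
      = ∑ k, ((Z * V) k i) ^ 2 + c := quad_entry_shift Z V (VtV hA) c i
  have h2 : (Vᵀ * (Zᵀ * Z + c • (1 : Matrix (Fin n) (Fin n) ℝ)) * V) i i = hA.eigenvalues i := by
    rw [diag_fact hA, Matrix.diagonal_apply_eq]
  have h3 : (0:ℝ) ≤ ∑ k, ((Z * V) k i) ^ 2 := Finset.sum_nonneg fun k _ => sq_nonneg _
  rw [h1] at h2; linarith

lemma trace_quad_cfc_nonneg (hA : A.IsHermitian) (f : ℝ → ℝ)
    (hf : ∀ i, 0 ≤ f (hA.eigenvalues i)) (D : Matrix (Fin n) (Fin n) ℝ) :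
    0 ≤ (Dᵀ * (D * hA.cfc f)).trace := by
  rw [← Matrix.mul_assoc, trace_mul_cfc hA (Dᵀ * D) f]
  refine Finset.sum_nonneg fun i _ => ?_
  rw [quad_entry D _ i]
  exact mul_nonneg (hf i) (Finset.sum_nonneg fun k _ => sq_nonneg _)

end AuxLemmas

/-- **Theorem 3 (1): monotonicity.** If `Z_{t+1}` solves the IRLS update equation
`p·Z_{t+1}·M_t + λq·Xᵀ(XZ_{t+1} − X)·N_t = 0` with `M_t = (Z_tᵀZ_t + μ²I)^{p/2−1}` and
`N_t` diagonal with `(N_t)ᵢᵢ = (‖(XZ_t − X)ᵢ‖₂² + μ²)^{q/2−1}`, then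
`J(Z_{t+1}, μ) ≤ J(Z_t, μ)`. -/
theorem stmt_11 {d n : ℕ} (X : Matrix (Fin d) (Fin n) ℝ) (lam p q μ : ℝ)
    (hlam : 0 < lam) (hμ : 0 < μ) (hp0 : 0 < p) (hp2 : p < 2) (hq0 : 0 < q) (hq2 : q < 2)
    (Zt Zt1 Mt Nt : Matrix (Fin n) (Fin n) ℝ)
    (hM : Mt = mpow (Ztᵀ * Zt + μ ^ 2 • (1 : Matrix (Fin n) (Fin n) ℝ)) (p / 2 - 1))
    (hN : Nt = Matrix.diagonal fun i => (∑ j, ((X * Zt - X) j i) ^ 2 + μ ^ 2) ^ (q / 2 - 1))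
    (hupd : p • (Zt1 * Mt) + (lam * q) • (Xᵀ * ((X * Zt1 - X) * Nt)) = 0) :
    smoothJ X lam p q Zt1 μ ≤ smoothJ X lam p q Zt μ := by
  have hc : (0:ℝ) < μ ^ 2 := by positivity
  have hr0 : 0 < p / 2 := by linarith
  have hr1 : p / 2 < 1 := by linarith
  have hs0 : 0 < q / 2 := by linarith
  have hs1 : q / 2 < 1 := by linarith
  set D := Zt - Zt1 with hD
  set ν : Fin n → ℝ := fun i => (∑ j, ((X * Zt - X) j i) ^ 2 + μ ^ 2) ^ (q / 2 - 1) with hν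
  set a : Fin n → ℝ := fun i => ∑ j, ((X * Zt1 - X) j i) ^ 2 with ha
  set b : Fin n → ℝ := fun i => ∑ j, ((X * Zt - X) j i) ^ 2 with hb
  set T1 := ((Zt - Zt1)ᵀ * (Zt1 * Mt)).trace with hT1
  set T3 := ((Zt - Zt1)ᵀ * ((Zt - Zt1) * Mt)).trace with hT3
  set C := ∑ i, ν i * ∑ j, ((X * D) j i) * ((X * Zt1 - X) j i) with hC
  set E := ∑ i, ν i * ∑ j, ((X * D) j i) ^ 2 with hE
  have hA : (Ztᵀ * Zt + μ ^ 2 • (1 : Matrix (Fin n) (Fin n) ℝ)).IsHermitian :=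
    herm_shift Zt (μ ^ 2)
  -- Mt is symmetric
  have hMsymm : Mtᵀ = Mt := by
    have h := mpow_isHermitian hA (p / 2 - 1)
    rw [← hM] at h
    rw [← conjTranspose_eq_transpose_of_trivial]
    exact h
  -- Klein inequality for the trace part
  have hk := klein_spec (c := μ ^ 2) (r := p / 2) Zt Zt1 hc hr0 hr1
  have hBA : (Zt1ᵀ * Zt1 + μ ^ 2 • (1 : Matrix (Fin n) (Fin n) ℝ)) -
      (Ztᵀ * Zt + μ ^ 2 • (1 : Matrix (Fin n) (Fin n) ℝ)) = Zt1ᵀ * Zt1 - Ztᵀ * Zt :=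
    add_sub_add_right_eq_sub _ _ _
  rw [hBA, show p / 2 - 1 = p / 2 - 1 from rfl, ← hM] at hk
  rw [expand_quad Zt Zt1 Mt hMsymm] at hk
  -- T3 ≥ 0
  have hT3nonneg : 0 ≤ T3 := by
    rw [hT3, hM, mpow_eq hA]
    exact trace_quad_cfc_nonneg hA _ (fun i => Real.rpow_nonneg
      (le_trans hc.le (eig_shift_ge Zt (μ ^ 2) hA i)) _) _
  -- q-part tangent inequality
  have htangent : ∀ i, (a i + μ ^ 2) ^ (q / 2) ≤
      (b i + μ ^ 2) ^ (q / 2) + (q / 2) * ν i * (a i - b i) := by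
    intro i
    have hx : (0:ℝ) ≤ a i + μ ^ 2 := by
      have : (0:ℝ) ≤ a i := Finset.sum_nonneg fun j _ => sq_nonneg _
      linarith
    have hs : (0:ℝ) < b i + μ ^ 2 := by
      have : (0:ℝ) ≤ b i := Finset.sum_nonneg fun j _ => sq_nonneg _
      linarith
    have h := rpow_tangent hx hs hs0 hs1
    have hsub : (a i + μ ^ 2) - (b i + μ ^ 2) = a i - b i := by ring
    rw [hsub] at h
    exact h
  -- column expansion : b i = a i + 2 c_i + e_i
  have hcol : ∀ i, b i = a i + 2 * (∑ j, ((X * D) j i) * ((X * Zt1 - X) j i))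
      + ∑ j, ((X * D) j i) ^ 2 := by
    intro i
    have hentry : ∀ j, (X * Zt - X) j i = (X * Zt1 - X) j i + (X * D) j i := by
      intro j
      rw [hD, Matrix.mul_sub]
      simp [Matrix.sub_apply, Matrix.add_apply]
    rw [hb]
    calc ∑ j, ((X * Zt - X) j i) ^ 2
        = ∑ j, (((X * Zt1 - X) j i) ^ 2 + 2 * (((X * D) j i) * ((X * Zt1 - X) j i))
            + ((X * D) j i) ^ 2) := by
          refine Finset.sum_congr rfl fun j _ => ?_
          rw [hentry j]; ring
      _ = _ := by
          rw [Finset.sum_add_distrib, Finset.sum_add_distrib, ← Finset.mul_sum]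
  -- trace form of the update equation
  have hup0 : p * T1 + lam * q * C = 0 := by
    have h0 : (Dᵀ * (p • (Zt1 * Mt) + (lam * q) • (Xᵀ * ((X * Zt1 - X) * Nt)))).trace = 0 := by
      rw [hupd, Matrix.mul_zero, trace_zero]
    rw [Matrix.mul_add, Matrix.mul_smul, Matrix.mul_smul, trace_add, trace_smul, trace_smul,
      smul_eq_mul, smul_eq_mul] at h0
    have hCtr : (Dᵀ * (Xᵀ * ((X * Zt1 - X) * Nt))).trace = C := by
      rw [show Dᵀ * (Xᵀ * ((X * Zt1 - X) * Nt)) = (X * D)ᵀ * ((X * Zt1 - X) * Nt) by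
        rw [transpose_mul, Matrix.mul_assoc], hN, trace_weight]
    rw [hCtr] at h0
    rw [hT1, ← hD]
    exact h0
  -- nonnegativity of E
  have hEnonneg : 0 ≤ E := by
    refine Finset.sum_nonneg fun i _ => mul_nonneg ?_ (Finset.sum_nonneg fun j _ => sq_nonneg _)
    exact Real.rpow_nonneg (by positivity) _
  -- sum the tangent inequalities
  have hsumq : ∑ i, (a i + μ ^ 2) ^ (q / 2) ≤
      (∑ i, (b i + μ ^ 2) ^ (q / 2)) + (q / 2) * (-2 * C - E) := by
    calc ∑ i, (a i + μ ^ 2) ^ (q / 2)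
        ≤ ∑ i, ((b i + μ ^ 2) ^ (q / 2) + (q / 2) * ν i * (a i - b i)) :=
          Finset.sum_le_sum fun i _ => htangent i
      _ = (∑ i, (b i + μ ^ 2) ^ (q / 2)) + (q / 2) * ∑ i, ν i * (a i - b i) := by
          rw [Finset.sum_add_distrib, Finset.mul_sum]
          congr 1
          exact Finset.sum_congr rfl fun i _ => by ring
      _ = (∑ i, (b i + μ ^ 2) ^ (q / 2)) + (q / 2) * (-2 * C - E) := by
          have hsub : ∑ i, ν i * (a i - b i) = -2 * C - E := by
            rw [hC, hE, Finset.mul_sum, ← Finset.sum_sub_distrib]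
            refine Finset.sum_congr rfl fun i _ => ?_
            have h : a i - b i = -(2 * (∑ j, ((X * D) j i) * ((X * Zt1 - X) j i))
                + ∑ j, ((X * D) j i) ^ 2) := by linarith [hcol i]
            rw [h]; ring
          rw [hsub]
  -- assemble everything
  simp only [smoothJ]
  simp only [ha, hb] at hsumq
  have key1 : lam * (∑ i, (∑ j, ((X * Zt1 - X) j i) ^ 2 + μ ^ 2) ^ (q / 2)) ≤
      lam * (∑ i, (∑ j, ((X * Zt - X) j i) ^ 2 + μ ^ 2) ^ (q / 2)) + lam * ((q / 2) * (-2 * C - E)) := by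
    have h := mul_le_mul_of_nonneg_left hsumq hlam.le
    have h2 : lam * ((∑ i, (∑ j, ((X * Zt - X) j i) ^ 2 + μ ^ 2) ^ (q / 2)) + q / 2 * (-2 * C - E))
        = lam * (∑ i, (∑ j, ((X * Zt - X) j i) ^ 2 + μ ^ 2) ^ (q / 2)) + lam * ((q / 2) * (-2 * C - E)) := by
      ring
    linarith [h, h2.le, h2.ge]
  have key2 : lam * ((q / 2) * (-2 * C - E)) = -(lam * q * C) - lam * (q / 2) * E := by ring
  have key3 : 0 ≤ lam * (q / 2) * E := by positivity
  have key4 : 0 ≤ p / 2 * T3 := by positivity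
  have key5 : p / 2 * (-2 * T1 - T3) = -(p * T1) - p / 2 * T3 := by ring
  rw [← hT1, ← hT3] at hk
  linarith [hk, key1, key2, key3, key4, key5, hup0]
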